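/- arXiv:1907.03730 — 2 statements merged into one kernel-verified Lean document; each statement's English description precedes it below -/
import Mathlib

section
/- Let V be a finite set with |V| = m, and let f, m₀ be natural numbers with m ≤ 3·f, f ≤ m, and 3·m₀ ≤ 2·m. Then there exist pairwise disjoint sets F, Q₁, Q₂ ⊆ V with F ∪ Q₁ ∪ Q₂ = V, |F| = f, |F| + |Q₁| ≥ m₀ and |F| + |Q₂| ≥ m₀; in other words, the adversary's coalition F together with each half of a suitable partition of the correct validators forms a quorum of size at least m₀, so two conflicting transactions tx and tx' spending the same coin can both be validated. (This is the safety half of the counting argument in Theorem 13 of the paper — Resilience optimality — showing that any commit threshold m₀ ≤ 2m/3 permits a double spend when f ≥ m/3.) -/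
/-- Safety half of Theorem 13 (Resilience optimality): if `f ≥ m/3`
(i.e. `m ≤ 3·f`), `f ≤ m`, and the commit threshold satisfies `m₀ ≤ 2m/3`
(i.e. `3·m₀ ≤ 2·m`), then the validator set `V` of size `m` can be
partitioned into pairwise disjoint `F`, `Q₁`, `Q₂` with `|F| = f` such that
`F ∪ Q₁` and `F ∪ Q₂` both reach the threshold `m₀`, permitting a double
spend. -/
theorem double_spend_partition {α : Type*} [DecidableEq α]
    (V : Finset α) (m f m₀ : ℕ)
    (hV : V.card = m)
    (hf : m ≤ 3 * f) (hfm : f ≤ m) (hm₀ : 3 * m₀ ≤ 2 * m) :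
    ∃ F Q₁ Q₂ : Finset α,
      Disjoint F Q₁ ∧ Disjoint F Q₂ ∧ Disjoint Q₁ Q₂ ∧
      F ∪ Q₁ ∪ Q₂ = V ∧
      F.card = f ∧
      m₀ ≤ F.card + Q₁.card ∧
      m₀ ≤ F.card + Q₂.card := by
  obtain ⟨F, hFV, hFcard⟩ := Finset.exists_subset_card_eq (hV ▸ hfm : f ≤ V.card)
  set R := V \ F with hR
  have hRcard : R.card = m - f := by
    rw [hR, Finset.card_sdiff_of_subset hFV, hV, hFcard]
  have ht : m₀ - f ≤ R.card := by omega
  obtain ⟨Q₁, hQ₁R, hQ₁card⟩ := Finset.exists_subset_card_eq ht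
  refine ⟨F, Q₁, R \ Q₁, ?_, ?_, Finset.disjoint_sdiff, ?_, hFcard, ?_, ?_⟩
  · exact (Finset.disjoint_sdiff.mono_right hQ₁R)
  · exact Finset.disjoint_sdiff.mono_right (Finset.sdiff_subset)
  · rw [Finset.union_assoc, Finset.union_sdiff_of_subset hQ₁R, hR,
      Finset.union_sdiff_of_subset hFV]
  · rw [hFcard, hQ₁card]; omega
  · rw [hFcard, Finset.card_sdiff_of_subset hQ₁R, hRcard, hQ₁card]; omega
end

section
/- For all natural numbers m and f with f ≤ m, the following are equivalent: (i) there exists a commit threshold m₀ with m₀ ≤ m − f (liveness: the correct validators alone can reach the threshold) and m + f + 1 ≤ 2·m₀ (safety: any two sets of at least m₀ validators out of m intersect in strictly more than f elements, hence in a correct validator); (ii) 3·f < m. (This arithmetic equivalence is the quantitative content of Theorem 13 of the paper — Resilience optimality: an offchain protocol tolerating both adversarial silence and double-signing exists exactly when strictly fewer than a third of the m_v validators are Byzantine, matching the choice m₀ = ⌊2m/3⌋ + 1.) -/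
/-- Quantitative content of Theorem 13 (Resilience optimality): with `m`
validators of which `f ≤ m` are Byzantine, there exists a commit threshold
`m₀` guaranteeing both liveness (`m₀ ≤ m − f`) and safety
(`m + f + 1 ≤ 2·m₀`, i.e. any two `m₀`-quorums intersect in more than `f`
validators) if and only if `3·f < m`. -/
theorem resilience_optimality_iff (m f : ℕ) (hfm : f ≤ m) :
    (∃ m₀ : ℕ, m₀ ≤ m - f ∧ m + f + 1 ≤ 2 * m₀) ↔ 3 * f < m := by
  constructor
  · rintro ⟨m₀, h1, h2⟩
    have := Nat.sub_le_iff_le_add.mp (le_refl (m - f))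
    omega
  · intro h
    exact ⟨m - f, le_refl _, by omega⟩
end
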